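/- Let X ∈ B(L²(𝕋)) satisfy X M_z* P₋ = M_z* X P₋, where P₋ = I − P₊. Then ψ := z·X(z̄) satisfies ψ ∈ L∞(𝕋) with ‖ψ‖_∞ ≤ ‖X‖, and X f = ψ f for all f ∈ H²(𝕋)^⊥, i.e. X P₋ = M_ψ P₋. -/

import Mathlib

open MeasureTheory Complex AddCircle
open scoped InnerProductSpace ENNReal Real

noncomputable section

namespace PaperTH

instance fact2pi : Fact (0 < 2 * Real.pi) := ⟨by positivity⟩

/-- The circle, as `ℝ / 2πℤ`. -/
abbrev 𝕋c := AddCircle (2 * Real.pi)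

/-- The normalized Lebesgue (Haar) measure on the circle. -/
abbrev μc : Measure 𝕋c := haarAddCircle

/-- `L²(𝕋)`. -/
abbrev L2 := Lp ℂ 2 μc

/-- The Hardy space `H²(𝕋)`: members of `L²(𝕋)` all of whose Fourier coefficients of
negative index vanish. -/
def Hardy : Submodule ℂ L2 where
  carrier := {f | ∀ n : ℤ, n < 0 → fourierCoeff (⇑f) n = 0}
  add_mem' := by
    intro f g hf hg n hn
    have hf' := hf n hn
    have hg' := hg n hn
    rw [← fourierBasis_repr] at hf' hg' ⊢
    rw [map_add, lp.coeFn_add, Pi.add_apply, hf', hg', add_zero]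
  zero_mem' := by
    intro n hn
    rw [← fourierBasis_repr, map_zero, lp.coeFn_zero, Pi.zero_apply]
  smul_mem' := by
    intro c f hf n hn
    have hf' := hf n hn
    rw [← fourierBasis_repr] at hf' ⊢
    rw [_root_.map_smul, lp.coeFn_smul, Pi.smul_apply, hf', smul_zero]

theorem isClosed_Hardy : IsClosed (Hardy : Set L2) := by
  have h : (Hardy : Set L2) =
      ⋂ (n : ℤ) (_ : n < 0), ((innerSL ℂ (fourierBasis n)) ⁻¹' {(0 : ℂ)}) := by
    ext f
    simp only [Set.mem_iInter, Set.mem_preimage, Set.mem_singleton_iff, SetLike.mem_coe]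
    constructor
    · intro hf n hn
      have := hf n hn
      rw [← fourierBasis_repr, fourierBasis.repr_apply_apply] at this
      simpa using this
    · intro hf n hn
      have := hf n hn
      rw [← fourierBasis_repr, fourierBasis.repr_apply_apply]
      simpa using this
  rw [h]
  exact isClosed_iInter fun n => isClosed_iInter fun _ =>
    (isClosed_singleton).preimage (innerSL ℂ (fourierBasis n)).continuous

instance : CompleteSpace Hardy := isClosed_Hardy.completeSpace_coe

/-- The Szegő projection `P₊ : L²(𝕋) → L²(𝕋)` onto the Hardy space. -/
def Pplus : L2 →L[ℂ] L2 := Hardy.subtypeL.comp (Submodule.orthogonalProjectionOnto Hardy)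

/-- `P₋ = I - P₊`. -/
def Pminus : L2 →L[ℂ] L2 := ContinuousLinearMap.id ℂ L2 - Pplus

/-- Underlying function of the multiplication operator. -/
def MopFun (φ : 𝕋c → ℂ) (hφ : MemLp φ ∞ μc) (f : L2) : L2 :=
  ((Lp.memLp f).smul (r := 2) hφ).toLp (φ • ⇑f)

theorem MopFun_coeFn (φ : 𝕋c → ℂ) (hφ : MemLp φ ∞ μc) (f : L2) :
    ⇑(MopFun φ hφ f) =ᵐ[μc] φ • ⇑f := MemLp.coeFn_toLp _

theorem MopFun_add (φ : 𝕋c → ℂ) (hφ : MemLp φ ∞ μc) (f g : L2) :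
    MopFun φ hφ (f + g) = MopFun φ hφ f + MopFun φ hφ g := by
  apply Lp.ext
  filter_upwards [MopFun_coeFn φ hφ (f + g), MopFun_coeFn φ hφ f, MopFun_coeFn φ hφ g,
    Lp.coeFn_add f g, Lp.coeFn_add (MopFun φ hφ f) (MopFun φ hφ g)] with x h1 h2 h3 h4 h5
  simp only [h1, h5, Pi.add_apply, h2, h3, Pi.smul_apply, Pi.mul_apply, smul_eq_mul, h4]
  ring

theorem MopFun_smul (φ : 𝕋c → ℂ) (hφ : MemLp φ ∞ μc) (c : ℂ) (f : L2) :
    MopFun φ hφ (c • f) = c • MopFun φ hφ f := by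
  apply Lp.ext
  filter_upwards [MopFun_coeFn φ hφ (c • f), MopFun_coeFn φ hφ f,
    Lp.coeFn_smul c f, Lp.coeFn_smul c (MopFun φ hφ f)] with x h1 h2 h3 h4
  simp only [h1, h4, Pi.smul_apply, Pi.mul_apply, h2, h3, smul_eq_mul]
  ring

theorem MopFun_norm (φ : 𝕋c → ℂ) (hφ : MemLp φ ∞ μc) (f : L2) :
    ‖MopFun φ hφ f‖ ≤ (eLpNorm φ ∞ μc).toReal * ‖f‖ := by
  have hrfl : MopFun φ hφ f = ((Lp.memLp f).smul (r := 2) hφ).toLp (φ • ⇑f) := rfl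
  rw [hrfl, Lp.norm_toLp (φ • ⇑f) ((Lp.memLp f).smul (r := 2) hφ), Lp.norm_def]
  have hb : eLpNorm (φ • ⇑f) 2 μc ≤ eLpNorm φ ∞ μc * eLpNorm (⇑f) 2 μc :=
    eLpNorm_smul_le_eLpNorm_top_mul_eLpNorm 2 (Lp.aestronglyMeasurable f) φ
  have hfin : eLpNorm φ ∞ μc * eLpNorm (⇑f) 2 μc ≠ ∞ :=
    ENNReal.mul_ne_top hφ.eLpNorm_ne_top (Lp.eLpNorm_ne_top f)
  calc (eLpNorm (φ • ⇑f) 2 μc).toReal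
      ≤ (eLpNorm φ ∞ μc * eLpNorm (⇑f) 2 μc).toReal := ENNReal.toReal_mono hfin hb
    _ = (eLpNorm φ ∞ μc).toReal * (eLpNorm (⇑f) 2 μc).toReal := ENNReal.toReal_mul

/-- The multiplication (Laurent) operator `M_φ` on `L²(𝕋)` with symbol `φ ∈ L∞(𝕋)`. -/
def Mop (φ : 𝕋c → ℂ) (hφ : MemLp φ ∞ μc) : L2 →L[ℂ] L2 :=
  LinearMap.mkContinuous
    { toFun := MopFun φ hφ
      map_add' := MopFun_add φ hφ
      map_smul' := MopFun_smul φ hφ }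
    (eLpNorm φ ∞ μc).toReal
    (fun f => MopFun_norm φ hφ f)

theorem Mop_coeFn (φ : 𝕋c → ℂ) (hφ : MemLp φ ∞ μc) (f : L2) :
    ⇑(Mop φ hφ f) =ᵐ[μc] fun x => φ x * f x :=
  MopFun_coeFn φ hφ f

/-- The conjugation operator `J : L²(𝕋) → L²(𝕋)`, `(Jf)(z) = f(z̄)`
(composition with `x ↦ -x` on the additive circle). -/
def Jop : L2 →L[ℂ] L2 :=
  LinearMap.mkContinuous
    { toFun := fun f =>
        Lp.compMeasurePreserving (fun x : 𝕋c => -x) (Measure.measurePreserving_neg μc) f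
      map_add' := by
        intro f g
        exact map_add (Lp.compMeasurePreserving _ (Measure.measurePreserving_neg μc)) f g
      map_smul' := by
        intro c f
        apply Lp.ext
        simp only [RingHom.id_apply]
        have hmp := Measure.measurePreserving_neg (μ := μc)
        have h1 := Lp.coeFn_compMeasurePreserving (μ := μc) (c • f) hmp
        have h2 := Lp.coeFn_compMeasurePreserving (μ := μc) f hmp
        have h3 : ⇑(c • f) ∘ (fun x : 𝕋c => -x) =ᵐ[μc] (c • ⇑f) ∘ (fun x : 𝕋c => -x) :=
          hmp.quasiMeasurePreserving.ae_eq_comp (Lp.coeFn_smul c f)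
        have h4 : (c • ⇑f) ∘ (fun x : 𝕋c => -x) = c • (⇑f ∘ fun x : 𝕋c => -x) := rfl
        have h5 : c • (⇑f ∘ fun x : 𝕋c => -x) =ᵐ[μc]
            c • ⇑(Lp.compMeasurePreserving (fun x : 𝕋c => -x) hmp f) :=
          h2.symm.const_smul c
        exact ((h1.trans h3).trans ((h4 ▸ h5 : _))).trans (Lp.coeFn_smul c _).symm }
    1
    (by
      intro f
      simp only [LinearMap.coe_mk, AddHom.coe_mk, one_mul]
      exact le_of_eq (Lp.norm_compMeasurePreserving f _))

/-- The Toeplitz operator `T_φ = P₊ M_φ |_{H²}` with symbol `φ ∈ L∞(𝕋)`. -/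
def Toep (φ : 𝕋c → ℂ) (hφ : MemLp φ ∞ μc) : Hardy →L[ℂ] Hardy :=
  (Submodule.orthogonalProjectionOnto Hardy).comp ((Mop φ hφ).comp Hardy.subtypeL)

/-- The Hankel operator `H_φ = P₊ M_φ J |_{H²}` with symbol `φ ∈ L∞(𝕋)`. -/
def Hank (φ : 𝕋c → ℂ) (hφ : MemLp φ ∞ μc) : Hardy →L[ℂ] Hardy :=
  (Submodule.orthogonalProjectionOnto Hardy).comp ((Mop φ hφ).comp (Jop.comp Hardy.subtypeL))

/-- The coordinate function `z` on the circle. -/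
def zFun : 𝕋c → ℂ := fun x => fourier 1 x

theorem zFun_memℒp : MemLp zFun ∞ μc := by
  refine memLp_top_of_bound ((fourier 1).continuous.aestronglyMeasurable) 1
    (Filter.Eventually.of_forall fun x => ?_)
  simp only [zFun, fourier_apply, Circle.norm_coe, le_refl]

/-- The unilateral shift `T_z`. -/
def Tz : Hardy →L[ℂ] Hardy := Toep zFun zFun_memℒp

/-- The bilateral shift `M_z` on `L²(𝕋)`. -/
def Mz : L2 →L[ℂ] L2 := Mop zFun zFun_memℒp

/-- `A` is a Toeplitz + Hankel operator. -/
def IsToepPlusHank (A : Hardy →L[ℂ] Hardy) : Prop :=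
  ∃ (φ ψ : 𝕋c → ℂ) (hφ : MemLp φ ∞ μc) (hψ : MemLp ψ ∞ μc), A = Toep φ hφ + Hank ψ hψ

/-- `φ` belongs to `H^∞`: it is essentially bounded and all its negative Fourier
coefficients vanish. -/
def IsHinf (φ : 𝕋c → ℂ) : Prop :=
  MemLp φ ∞ μc ∧ ∀ n : ℤ, n < 0 → fourierCoeff φ n = 0

/-- `θ` is an inner function: `θ ∈ H^∞` and `|θ| = 1` a.e. on the circle. -/
def IsInner (θ : 𝕋c → ℂ) : Prop :=
  IsHinf θ ∧ ∀ᵐ x ∂μc, ‖θ x‖ = 1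

theorem Mop_norm_of_inner {θ : 𝕋c → ℂ} (hθ : IsInner θ) (f : L2) :
    ‖Mop θ hθ.1.1 f‖ = ‖f‖ := by
  have h1 : ⇑(Mop θ hθ.1.1 f) =ᵐ[μc] θ • ⇑f := MopFun_coeFn θ hθ.1.1 f
  rw [Lp.norm_def, Lp.norm_def]
  congr 1
  rw [eLpNorm_congr_ae h1]
  apply eLpNorm_congr_norm_ae
  filter_upwards [hθ.2] with x hx
  simp [norm_smul, hx]

/-- The (Beurling-type) subspace `θ H²` of the Hardy space, for an inner function `θ`. -/
def thetaSub (θ : 𝕋c → ℂ) (hθ : IsInner θ) : Submodule ℂ Hardy where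
  carrier := {f | ∃ g : Hardy, (f : L2) = Mop θ hθ.1.1 (g : L2)}
  add_mem' := by
    rintro f f' ⟨g, hg⟩ ⟨g', hg'⟩
    exact ⟨g + g', by
      simp only [Submodule.coe_add, hg, hg']
      rw [← map_add]⟩
  zero_mem' := ⟨0, by simp⟩
  smul_mem' := by
    rintro c f ⟨g, hg⟩
    exact ⟨c • g, by
      rw [Submodule.coe_smul, hg, ← (Mop θ hθ.1.1).map_smul]
      rfl⟩

theorem isClosed_thetaSub (θ : 𝕋c → ℂ) (hθ : IsInner θ) :
    IsClosed ((thetaSub θ hθ) : Set Hardy) := by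
  have hiso : Isometry (fun g : Hardy => Mop θ hθ.1.1 (g : L2)) := by
    apply Isometry.of_dist_eq
    intro g g'
    rw [dist_eq_norm, dist_eq_norm, ← map_sub, ← Submodule.coe_sub, Mop_norm_of_inner hθ]
    rfl
  have hrange : IsClosed (Set.range fun g : Hardy => Mop θ hθ.1.1 (g : L2)) :=
    hiso.isClosedEmbedding.isClosed_range
  have hset : ((thetaSub θ hθ) : Set Hardy) =
      (Subtype.val) ⁻¹' (Set.range fun g : Hardy => Mop θ hθ.1.1 (g : L2)) := by
    ext f
    constructor
    · rintro ⟨g, hg⟩; exact ⟨g, hg.symm⟩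
    · rintro ⟨g, hg⟩; exact ⟨g, hg.symm⟩
  rw [hset]
  exact hrange.preimage continuous_subtype_val

/-- The model space `𝒦_θ = H² ⊖ θH²`. -/
def modelSpace (θ : 𝕋c → ℂ) (hθ : IsInner θ) : Submodule ℂ Hardy := (thetaSub θ hθ)ᗮ

/-- The orthogonal projection of `H²` onto `θH²`. -/
def Ptheta (θ : 𝕋c → ℂ) (hθ : IsInner θ) : Hardy →L[ℂ] Hardy :=
  haveI : CompleteSpace (thetaSub θ hθ) := (isClosed_thetaSub θ hθ).completeSpace_coe
  (thetaSub θ hθ).subtypeL.comp (Submodule.orthogonalProjectionOnto (thetaSub θ hθ))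

/-- The orthogonal projection of `H²` onto the model space `𝒦_θ`. -/
def Pmodel (θ : 𝕋c → ℂ) (hθ : IsInner θ) : Hardy →L[ℂ] Hardy :=
  haveI hc : CompleteSpace (thetaSub θ hθ) := (isClosed_thetaSub θ hθ).completeSpace_coe
  haveI h2 : Submodule.HasOrthogonalProjection (modelSpace θ hθ) :=
    (inferInstance : Submodule.HasOrthogonalProjection (thetaSub θ hθ)ᗮ)
  (modelSpace θ hθ).subtypeL.comp (Submodule.orthogonalProjectionOnto (modelSpace θ hθ))

/-- The monomial `z^k`, as an element of the Hardy space. -/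
def monoH (k : ℕ) : Hardy :=
  ⟨fourierLp 2 (k : ℤ), by
    intro n hn
    rw [← fourierBasis_repr]
    have hb : (fourierLp 2 (k : ℤ) : L2) = fourierBasis (k : ℤ) := by rw [coe_fourierBasis]
    rw [hb, fourierBasis.repr_self]
    exact lp.single_apply_ne 2 (k : ℤ) _ (by omega)⟩

/-- `T_z^*`, the adjoint of the unilateral shift. -/
def TzStar : Hardy →L[ℂ] Hardy := ContinuousLinearMap.adjoint Tz

/-- `M_z^*`, the adjoint of the bilateral shift. -/
def MzStar : L2 →L[ℂ] L2 := ContinuousLinearMap.adjoint Mz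

/-- The constant function `1` as an element of `L²(𝕋)`. -/
def oneL2 : L2 := (memLp_const (1 : ℂ)).toLp (fun _ => (1 : ℂ))

/-- The function `z̄ = conj z` on the circle. -/
def zbarFun : 𝕋c → ℂ := fun x => fourier (-1) x

theorem zbarFun_memℒp : MemLp zbarFun ∞ μc := by
  refine memLp_top_of_bound ((fourier (-1)).continuous.aestronglyMeasurable) 1
    (Filter.Eventually.of_forall fun x => ?_)
  simp only [zbarFun, fourier_apply, Circle.norm_coe, le_refl]

/-- The function `z̄` as an element of `L²(𝕋)`. -/
def zbarL2 : L2 := (zbarFun_memℒp.mono_exponent le_top).toLp zbarFun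

theorem zbarsq_memℒp {ψ : 𝕋c → ℂ} (hψ : MemLp ψ ∞ μc) :
    MemLp (fun x : 𝕋c => ((starRingEnd ℂ) (zFun x) ^ 2 - 1) * ψ x) ∞ μc := by
  have hc : Continuous fun x : 𝕋c => (starRingEnd ℂ) (zFun x) ^ 2 - 1 := by
    have h1 : Continuous (zFun) := (fourier 1).continuous
    exact ((h1.star.pow 2).sub continuous_const)
  have hb : MemLp (fun x : 𝕋c => (starRingEnd ℂ) (zFun x) ^ 2 - 1) ∞ μc := by
    refine memLp_top_of_bound hc.aestronglyMeasurable 2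
      (Filter.Eventually.of_forall fun x => ?_)
    calc ‖(starRingEnd ℂ) (zFun x) ^ 2 - 1‖ ≤ ‖(starRingEnd ℂ) (zFun x) ^ 2‖ + ‖(1 : ℂ)‖ :=
          norm_sub_le _ _
      _ ≤ 2 := by
          rw [norm_pow, RCLike.norm_conj]
          simp only [zFun, fourier_apply, Circle.norm_coe, norm_one]
          norm_num
  have h2 := hψ.smul (r := ∞) hb
  have h3 : ((fun x : 𝕋c => (starRingEnd ℂ) (zFun x) ^ 2 - 1) • ψ) =
      fun x : 𝕋c => ((starRingEnd ℂ) (zFun x) ^ 2 - 1) * ψ x := by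
    funext x
    simp only [Pi.smul_apply, smul_eq_mul, Pi.mul_apply]
  exact h3 ▸ h2

/-- `A` is `θ`-paired: `A = T_φ P_{θH²} + T_ψ P_{𝒦_θ}` for some `φ, ψ ∈ H^∞`. -/
def IsThetaPaired (θ : 𝕋c → ℂ) (hθ : IsInner θ) (X : Hardy →L[ℂ] Hardy) : Prop :=
  ∃ (φ ψ : 𝕋c → ℂ) (hφ : IsHinf φ) (hψ : IsHinf ψ),
    X = (Toep φ hφ.1).comp (Ptheta θ hθ) + (Toep ψ hψ.1).comp (Pmodel θ hθ)



section CoAux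

open Filter Topology

/-- basis element -/
def eB (n : ℤ) : L2 := fourierBasis n

lemma eB_coeFn (n : ℤ) : ⇑(eB n) =ᵐ[μc] fourier n := by
  have h : eB n = fourierLp 2 n := congrFun coe_fourierBasis n
  rw [h]; exact coeFn_fourierLp 2 n

lemma eB_mem_Hardy {n : ℤ} (hn : 0 ≤ n) : eB n ∈ Hardy := by
  intro m hm
  rw [← fourierBasis_repr]
  have h : fourierBasis.repr (eB n) = lp.single 2 n 1 := fourierBasis.repr_self n
  rw [h]
  exact lp.single_apply_ne 2 n _ (by omega)

lemma eB_mem_orth {n : ℤ} (hn : n < 0) : eB n ∈ Hardyᗮ := by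
  rw [Submodule.mem_orthogonal]
  intro u hu
  have h1 : ⟪eB n, u⟫_ℂ = fourierCoeff (⇑u) n := by
    rw [← fourierBasis_repr]
    exact (fourierBasis.repr_apply_apply u n).symm
  rw [← inner_conj_symm, h1, hu n hn, map_zero]

lemma Pminus_eB_neg {n : ℤ} (hn : n < 0) : Pminus (eB n) = eB n := by
  have h : Submodule.orthogonalProjectionOnto Hardy (eB n) = 0 :=
    Submodule.orthogonalProjectionOnto_apply_of_mem_orthogonal (eB_mem_orth hn)
  simp [Pminus, Pplus, h]

lemma Pminus_eB_nonneg {n : ℤ} (hn : 0 ≤ n) : Pminus (eB n) = 0 := by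
  have h : (Submodule.orthogonalProjectionOnto Hardy (eB n) : L2) = eB n :=
    Submodule.starProjection_eq_self_iff.mpr (eB_mem_Hardy hn)
  simp [Pminus, Pplus, h]

/-- multiplication by `z̄`. -/
def Mzb : L2 →L[ℂ] L2 := Mop zbarFun zbarFun_memℒp

lemma conj_zbar (x : 𝕋c) : (starRingEnd ℂ) (zbarFun x) = zFun x := by
  have : zbarFun x = (starRingEnd ℂ) (zFun x) := by
    simp only [zbarFun, zFun, ← fourier_neg]
  rw [this, Complex.conj_conj]

lemma Mzb_coeFn (f : L2) : ⇑(Mzb f) =ᵐ[μc] fun x => zbarFun x * f x := Mop_coeFn _ _ f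

lemma MzStar_eq : MzStar = Mzb := by
  rw [MzStar]
  symm
  rw [ContinuousLinearMap.eq_adjoint_iff]
  intro f g
  rw [MeasureTheory.L2.inner_def, MeasureTheory.L2.inner_def]
  apply integral_congr_ae
  filter_upwards [Mzb_coeFn f, Mop_coeFn zFun zFun_memℒp g] with x h1 h2
  simp only [RCLike.inner_apply]
  rw [h1, show ⇑(Mz g) x = zFun x * ⇑g x from h2, map_mul, conj_zbar]
  ring

lemma Mzb_eB (n : ℤ) : Mzb (eB n) = eB (n - 1) := by
  apply Lp.ext
  filter_upwards [Mzb_coeFn (eB n), eB_coeFn n, eB_coeFn (n - 1)]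
    with x h1 h2 h3
  rw [h1, h2, h3]
  show fourier (-1) x * fourier n x = fourier (n - 1) x
  rw [← fourier_add]
  have he : (-1 : ℤ) + n = n - 1 := by ring
  rw [he]

lemma Mzb_pow_eB (k : ℕ) (n : ℤ) : (Mzb ^ k) (eB n) = eB (n - k) := by
  induction k with
  | zero => simp
  | succ k ih =>
    rw [pow_succ', ContinuousLinearMap.mul_apply, ih, Mzb_eB]
    congr 1
    push_cast
    ring

end CoAux
section CoAux2

open Filter Topology

lemma norm_fourier (n : ℤ) (x : 𝕋c) : ‖fourier n x‖ = 1 := by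
  simp [fourier_apply, Circle.norm_coe]

lemma Mzb_pow_coeFn (k : ℕ) (g : L2) :
    ⇑((Mzb ^ k) g) =ᵐ[μc] fun x => fourier (-(k : ℤ)) x * g x := by
  induction k with
  | zero =>
    simp only [pow_zero, ContinuousLinearMap.one_apply, Nat.cast_zero, neg_zero]
    filter_upwards with x
    rw [fourier_zero, one_mul]
  | succ k ih =>
    rw [pow_succ', ContinuousLinearMap.mul_apply]
    filter_upwards [Mzb_coeFn ((Mzb ^ k) g), ih] with x h1 h2
    rw [h1, h2]
    show fourier (-1) x * (fourier (-(k : ℤ)) x * ⇑g x) = fourier (-((k : ℕ) + 1 : ℕ) : ℤ) x * ⇑g x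
    rw [← mul_assoc, ← fourier_add]
    have he : (-1 : ℤ) + -(k : ℤ) = -(((k : ℕ) + 1 : ℕ) : ℤ) := by push_cast; ring
    rw [he]

lemma Mzb_norm (g : L2) : ‖Mzb g‖ = ‖g‖ := by
  rw [Lp.norm_def, Lp.norm_def]
  congr 1
  rw [eLpNorm_congr_ae (Mzb_coeFn g)]
  apply eLpNorm_congr_norm_ae
  filter_upwards with x
  rw [norm_mul]
  show ‖fourier (-1) x‖ * _ = _
  rw [norm_fourier, one_mul]

lemma Mzb_pow_norm (k : ℕ) (g : L2) : ‖(Mzb ^ k) g‖ = ‖g‖ := by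
  induction k with
  | zero => simp
  | succ k ih => rw [pow_succ', ContinuousLinearMap.mul_apply, Mzb_norm, ih]

lemma zbarL2_eq : zbarL2 = eB (-1) := by
  apply Lp.ext
  have h1 : ⇑zbarL2 =ᵐ[μc] zbarFun := MemLp.coeFn_toLp _
  filter_upwards [h1, eB_coeFn (-1)] with x h2 h3
  rw [h2, h3]
  rfl

lemma eLpNorm_coe (g : L2) : eLpNorm (⇑g) 2 μc = ENNReal.ofReal ‖g‖ := by
  rw [Lp.norm_def, ENNReal.ofReal_toReal (Lp.eLpNorm_ne_top g)]

lemma coeFn_finset_sum {ι : Type*} (s : Finset ι) (F : ι → L2) :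
    ⇑(∑ i ∈ s, F i) =ᵐ[μc] fun x => ∑ i ∈ s, (F i : 𝕋c → ℂ) x := by
  classical
  induction s using Finset.induction_on with
  | empty =>
    simp only [Finset.sum_empty]
    exact Lp.coeFn_zero ℂ 2 μc
  | insert a s' hnotmem ih =>
    rw [Finset.sum_insert hnotmem]
    filter_upwards [Lp.coeFn_add (F a) (∑ i ∈ s', F i), ih] with x h1 h2
    rw [h1]
    simp only [Pi.add_apply, h2, Finset.sum_insert hnotmem]

section WithX

variable (X : L2 →L[ℂ] L2)
    (h : X.comp (MzStar.comp Pminus) = MzStar.comp (X.comp Pminus))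

include h

lemma key {g : L2} (hg : Pminus g = g) : X (Mzb g) = Mzb (X g) := by
  have h' := ContinuousLinearMap.ext_iff.mp h g
  simp only [ContinuousLinearMap.comp_apply, hg, MzStar_eq] at h'
  exact h'

lemma X_eB (k : ℕ) : X (eB (-1 - (k : ℤ))) = (Mzb ^ k) (X zbarL2) := by
  induction k with
  | zero =>
    simp only [Nat.cast_zero, sub_zero, pow_zero, ContinuousLinearMap.one_apply, zbarL2_eq]
  | succ k ih =>
    have he : (-1 : ℤ) - ((k : ℕ) + 1 : ℕ) = (-1 - (k : ℤ)) - 1 := by push_cast; ring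
    rw [he, ← Mzb_eB, key X h (Pminus_eB_neg (by omega)), ih, pow_succ',
      ContinuousLinearMap.mul_apply]

lemma poly_bound (c : ℤ → ℂ) (s : Finset ℤ) :
    eLpNorm (fun x => (∑ n ∈ s, c n * fourier n x) * ⇑(X zbarL2) x) 2 μc
      ≤ ENNReal.ofReal (‖X‖ * ‖∑ n ∈ s, c n • eB n‖) := by
  classical
  set q : L2 := ∑ n ∈ s, c n • eB n with hq
  set N : ℤ := ((s.sup fun n => n.toNat : ℕ) : ℤ) with hN
  have hN0 : 0 ≤ N := Int.natCast_nonneg _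
  have hns : ∀ n ∈ s, n ≤ N := by
    intro n hn
    calc n ≤ (n.toNat : ℤ) := Int.self_le_toNat n
      _ ≤ N := by
          rw [hN]
          exact_mod_cast Finset.le_sup (f := fun n : ℤ => n.toNat) hn
  set f : L2 := (Mzb ^ (N.toNat + 1)) q with hf
  have hNc : ((N.toNat : ℤ)) = N := Int.toNat_of_nonneg hN0
  have hf2 : f = ∑ n ∈ s, c n • eB (n - (N + 1)) := by
    rw [hf, hq, map_sum]
    refine Finset.sum_congr rfl fun n hn => ?_
    rw [_root_.map_smul, Mzb_pow_eB]
    have hcast : ((N.toNat + 1 : ℕ) : ℤ) = N + 1 := by omega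
    rw [hcast]
  have hXf : X f = ∑ n ∈ s, c n • (Mzb ^ ((N - n).toNat)) (X zbarL2) := by
    rw [hf2, map_sum]
    refine Finset.sum_congr rfl fun n hn => ?_
    rw [_root_.map_smul]
    congr 1
    have he : n - (N + 1) = -1 - ((N - n).toNat : ℤ) := by
      rw [Int.toNat_of_nonneg (by have := hns n hn; omega)]
      ring
    rw [he, X_eB X h]
  have hae : ∀ᵐ x ∂μc, ∀ n ∈ (s : Set ℤ),
      ⇑(c n • (Mzb ^ ((N - n).toNat)) (X zbarL2)) x
        = c n * (fourier (-(((N - n).toNat : ℕ) : ℤ)) x * ⇑(X zbarL2) x) := by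
    rw [MeasureTheory.ae_ball_iff s.countable_toSet]
    intro n hn
    filter_upwards [Lp.coeFn_smul (c n) ((Mzb ^ ((N - n).toNat)) (X zbarL2)),
      Mzb_pow_coeFn ((N - n).toNat) (X zbarL2)] with x h1 h2
    rw [h1, Pi.smul_apply, smul_eq_mul, h2]
  have hcoe : ⇑(X f) =ᵐ[μc]
      fun x => fourier (-N) x * ((∑ n ∈ s, c n * fourier n x) * ⇑(X zbarL2) x) := by
    rw [hXf]
    filter_upwards [coeFn_finset_sum s
      (fun n => c n • (Mzb ^ ((N - n).toNat)) (X zbarL2)), hae] with x h1 h2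
    rw [h1, Finset.sum_congr rfl (fun n hn => h2 n (Finset.mem_coe.mpr hn)), Finset.sum_mul,
      Finset.mul_sum]
    refine Finset.sum_congr rfl fun n hn => ?_
    have he : (-(((N - n).toNat : ℕ) : ℤ)) = (-N) + n := by
      have := hns n hn
      omega
    rw [he, fourier_add]
    ring
  have hstep : eLpNorm ⇑(X f) 2 μc
      = eLpNorm (fun x => (∑ n ∈ s, c n * fourier n x) * ⇑(X zbarL2) x) 2 μc := by
    rw [eLpNorm_congr_ae hcoe]
    apply eLpNorm_congr_norm_ae
    filter_upwards with x
    rw [norm_mul, norm_fourier, one_mul]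
  calc eLpNorm (fun x => (∑ n ∈ s, c n * fourier n x) * ⇑(X zbarL2) x) 2 μc
      = ENNReal.ofReal ‖X f‖ := by rw [← hstep, eLpNorm_coe]
    _ ≤ ENNReal.ofReal (‖X‖ * ‖f‖) := ENNReal.ofReal_le_ofReal (X.le_opNorm f)
    _ = ENNReal.ofReal (‖X‖ * ‖q‖) := by rw [hf, Mzb_pow_norm]

lemma all_bound (g : L2) :
    eLpNorm (fun x => ⇑g x * ⇑(X zbarL2) x) 2 μc ≤ ENNReal.ofReal (‖X‖ * ‖g‖) := by
  classical
  have hdense : Dense (↑(Submodule.span ℂ (Set.range (⇑fourierBasis : ℤ → L2))) : Set L2) :=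
    Submodule.dense_iff_topologicalClosure_eq_top.mpr fourierBasis.dense_span
  obtain ⟨u, hu_mem, hu_lim⟩ := mem_closure_iff_seq_limit.mp (hdense g)
  have hbound : ∀ j, eLpNorm (fun x => ⇑(u j) x * ⇑(X zbarL2) x) 2 μc
      ≤ ENNReal.ofReal (‖X‖ * ‖u j‖) := by
    intro j
    obtain ⟨cc, hcc⟩ := Finsupp.mem_span_range_iff_exists_finsupp.mp (hu_mem j)
    have hqj : u j = ∑ n ∈ cc.support, cc n • eB n := by
      rw [← hcc, Finsupp.sum]
      rfl
    have hcoe : ⇑(u j) =ᵐ[μc] fun x => ∑ n ∈ cc.support, cc n * fourier n x := by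
      rw [hqj]
      have hae : ∀ᵐ x ∂μc, ∀ n ∈ (cc.support : Set ℤ),
          ⇑(cc n • eB n) x = cc n * fourier n x := by
        rw [MeasureTheory.ae_ball_iff (Finset.countable_toSet _)]
        intro n hn
        filter_upwards [Lp.coeFn_smul (cc n) (eB n), eB_coeFn n] with x h1 h2
        rw [h1, Pi.smul_apply, smul_eq_mul, h2]
      filter_upwards [coeFn_finset_sum cc.support (fun n => cc n • eB n), hae] with x h1 h2
      rw [h1]
      exact Finset.sum_congr rfl (fun n hn => h2 n (Finset.mem_coe.mpr hn))
    calc eLpNorm (fun x => ⇑(u j) x * ⇑(X zbarL2) x) 2 μc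
        = eLpNorm (fun x => (∑ n ∈ cc.support, cc n * fourier n x) * ⇑(X zbarL2) x) 2 μc := by
          apply eLpNorm_congr_ae
          filter_upwards [hcoe] with x h1
          rw [h1]
      _ ≤ ENNReal.ofReal (‖X‖ * ‖∑ n ∈ cc.support, cc n • eB n‖) := poly_bound X h cc cc.support
      _ = ENNReal.ofReal (‖X‖ * ‖u j‖) := by rw [← hqj]
  have hsm : ∀ j, AEStronglyMeasurable (fun x => ⇑(u j) x * ⇑(X zbarL2) x) μc :=
    fun j => (Lp.aestronglyMeasurable (u j)).mul (Lp.aestronglyMeasurable _)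
  have htim : TendstoInMeasure μc (fun j => ⇑(u j)) atTop ⇑g := by
    apply tendstoInMeasure_of_tendsto_eLpNorm (p := 2) (by norm_num)
      (fun j => Lp.aestronglyMeasurable (u j)) (Lp.aestronglyMeasurable g)
    have heq : (fun j => eLpNorm (⇑(u j) - ⇑g) 2 μc) = fun j => ENNReal.ofReal ‖u j - g‖ := by
      funext j
      rw [← eLpNorm_coe (u j - g)]
      apply eLpNorm_congr_ae
      filter_upwards [Lp.coeFn_sub (u j) g] with x h1
      exact h1.symm
    rw [heq]
    have h0 := tendsto_iff_norm_sub_tendsto_zero.mp hu_lim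
    have h1 := ENNReal.tendsto_ofReal h0
    simpa using h1
  obtain ⟨ns, hns_mono, hae⟩ := htim.exists_seq_tendsto_ae
  have hfatou := Lp.eLpNorm_lim_le_liminf_eLpNorm (μ := μc) (p := 2)
      (f := fun j => fun x => ⇑(u (ns j)) x * ⇑(X zbarL2) x) (fun j => hsm (ns j))
      (fun x => ⇑g x * ⇑(X zbarL2) x)
      (by filter_upwards [hae] with x hx
          exact hx.mul tendsto_const_nhds)
  refine le_trans hfatou (le_trans (Filter.liminf_le_liminf
    (Filter.Eventually.of_forall fun j => hbound (ns j))) ?_)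
  have h2 : Filter.Tendsto (fun j => ENNReal.ofReal (‖X‖ * ‖u (ns j)‖)) atTop
      (𝓝 (ENNReal.ofReal (‖X‖ * ‖g‖))) := by
    apply ENNReal.tendsto_ofReal
    exact tendsto_const_nhds.mul
      ((continuous_norm.tendsto g).comp (hu_lim.comp hns_mono.tendsto_atTop))
  rw [h2.liminf_eq]

lemma ae_bound : ∀ᵐ x ∂μc, ‖⇑(X zbarL2) x‖ ≤ ‖X‖ := by
  have hsm : StronglyMeasurable (⇑(X zbarL2)) := Lp.stronglyMeasurable _
  have hk : ∀ k : ℕ, μc {x | ‖X‖ + 1/((k:ℝ)+1) ≤ ‖⇑(X zbarL2) x‖} = 0 := by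
    intro k
    set ε : ℝ := 1/((k:ℝ)+1) with hε
    have hε0 : 0 < ε := by positivity
    set A : Set 𝕋c := {x | ‖X‖ + ε ≤ ‖⇑(X zbarL2) x‖} with hA
    have hAm : MeasurableSet A := measurableSet_le measurable_const hsm.measurable.norm
    have hAfin : μc A ≠ ∞ := measure_ne_top μc A
    set g : L2 := indicatorConstLp 2 hAm hAfin (1 : ℂ) with hg
    have hgcoe : ⇑g =ᵐ[μc] A.indicator (fun _ => (1:ℂ)) := indicatorConstLp_coeFn
    by_contra hμA
    set r : ℝ := 1/(2:ℝ≥0∞).toReal with hr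
    have hr0 : 0 < r := by
      rw [hr]
      norm_num
    have hlow : eLpNorm (A.indicator (fun _ => ((‖X‖ + ε : ℝ) : ℂ))) 2 μc
        ≤ eLpNorm (fun x => ⇑g x * ⇑(X zbarL2) x) 2 μc := by
      apply eLpNorm_mono_ae
      filter_upwards [hgcoe] with x h1
      rw [h1]
      by_cases hx : x ∈ A
      · rw [Set.indicator_of_mem hx, Set.indicator_of_mem hx, one_mul]
        rw [Complex.norm_real, Real.norm_eq_abs,
          _root_.abs_of_nonneg (add_nonneg (norm_nonneg X) hε0.le)]
        exact hx
      · rw [Set.indicator_of_notMem hx, Set.indicator_of_notMem hx]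
        simp
    have hLHS : eLpNorm (A.indicator (fun _ => ((‖X‖ + ε : ℝ) : ℂ))) 2 μc
        = ENNReal.ofReal (‖X‖ + ε) * μc A ^ r := by
      rw [eLpNorm_indicator_const hAm (by norm_num) (by norm_num)]
      congr 1
      rw [← ofReal_norm, Complex.norm_real, Real.norm_eq_abs,
        _root_.abs_of_nonneg (add_nonneg (norm_nonneg X) hε0.le)]
    have hRHS : eLpNorm (fun x => ⇑g x * ⇑(X zbarL2) x) 2 μc
        ≤ ENNReal.ofReal ‖X‖ * μc A ^ r := by
      refine le_trans (all_bound X h g) ?_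
      rw [ENNReal.ofReal_mul (norm_nonneg X)]
      have hgn : ‖g‖ = (μc A).toReal ^ r := by
        rw [hg, norm_indicatorConstLp (by norm_num) (by norm_num), norm_one, one_mul]
        rfl
      rw [hgn, ENNReal.toReal_rpow, ENNReal.ofReal_toReal
        (ENNReal.rpow_ne_top_of_nonneg hr0.le hAfin)]
    have hne0 : μc A ^ r ≠ 0 := by
      simp only [ne_eq, ENNReal.rpow_eq_zero_iff]
      push_neg
      constructor
      · intro h'
        exact absurd h' hμA
      · intro h'
        exact absurd h' hAfin
    have hnetop : μc A ^ r ≠ ∞ := ENNReal.rpow_ne_top_of_nonneg hr0.le hAfin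
    have hfinal : ENNReal.ofReal (‖X‖ + ε) * μc A ^ r ≤ ENNReal.ofReal ‖X‖ * μc A ^ r :=
      hLHS ▸ le_trans hlow hRHS
    rw [ENNReal.mul_le_mul_iff_left hne0 hnetop] at hfinal
    rw [ENNReal.ofReal_le_ofReal_iff (norm_nonneg X)] at hfinal
    linarith
  have hnull : μc {x | ‖X‖ < ‖⇑(X zbarL2) x‖} = 0 := by
    have hsub : {x | ‖X‖ < ‖⇑(X zbarL2) x‖}
        ⊆ ⋃ k : ℕ, {x | ‖X‖ + 1/((k:ℝ)+1) ≤ ‖⇑(X zbarL2) x‖} := by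
      intro x hx
      obtain ⟨k, hk'⟩ := exists_nat_one_div_lt (K := ℝ) (sub_pos.mpr hx)
      refine Set.mem_iUnion.mpr ⟨k, ?_⟩
      simp only [Set.mem_setOf_eq]
      linarith
    exact measure_mono_null hsub (measure_iUnion_null hk)
  rw [ae_iff]
  have hset : {x | ¬ ‖⇑(X zbarL2) x‖ ≤ ‖X‖} = {x | ‖X‖ < ‖⇑(X zbarL2) x‖} := by
    ext x
    simp only [Set.mem_setOf_eq, not_le]
  rw [hset]
  exact hnull

end WithX

end CoAux2
/-- **Theorem.** If `X M_z* P₋ = M_z* X P₋` then `ψ := z ⬝ X(z̄)` is (essentially) bounded with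
`‖ψ‖_∞ ≤ ‖X‖`, and `X P₋ = M_ψ P₋`. -/
theorem coanalytic_part_of_paired (X : L2 →L[ℂ] L2)
    (h : X.comp (MzStar.comp Pminus) = MzStar.comp (X.comp Pminus)) :
    ∃ hψ : MemLp (fun x : 𝕋c => zFun x * (X zbarL2 : 𝕋c → ℂ) x) ∞ μc,
      (eLpNorm (fun x : 𝕋c => zFun x * (X zbarL2 : 𝕋c → ℂ) x) ∞ μc).toReal ≤ ‖X‖ ∧
      X.comp Pminus = (Mop (fun x : 𝕋c => zFun x * (X zbarL2 : 𝕋c → ℂ) x) hψ).comp Pminus := by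
  have hae := ae_bound X h
  have haeψ : ∀ᵐ x ∂μc, ‖zFun x * ⇑(X zbarL2) x‖ ≤ ‖X‖ := by
    filter_upwards [hae] with x hx
    rw [norm_mul]
    have h1 : ‖zFun x‖ = 1 := norm_fourier 1 x
    rw [h1, one_mul]
    exact hx
  have hsm : AEStronglyMeasurable (fun x : 𝕋c => zFun x * ⇑(X zbarL2) x) μc :=
    ((fourier 1).continuous.aestronglyMeasurable).mul (Lp.aestronglyMeasurable _)
  have hψ : MemLp (fun x : 𝕋c => zFun x * ⇑(X zbarL2) x) ∞ μc :=
    memLp_top_of_bound hsm ‖X‖ haeψ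
  refine ⟨hψ, ?_, ?_⟩
  · have hle : eLpNorm (fun x : 𝕋c => zFun x * ⇑(X zbarL2) x) ∞ μc ≤ ENNReal.ofReal ‖X‖ := by
      rw [eLpNorm_exponent_top]
      exact eLpNormEssSup_le_of_ae_bound haeψ
    exact ENNReal.toReal_le_of_le_ofReal (norm_nonneg X) hle
  · have hrange : Set.range (⇑fourierBasis : ℤ → L2) = Set.range eB := rfl
    have hdense : Dense (↑(Submodule.span ℂ (Set.range eB)) : Set L2) := by
      apply Submodule.dense_iff_topologicalClosure_eq_top.mpr
      rw [← hrange]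
      exact fourierBasis.dense_span
    apply ContinuousLinearMap.ext_on (s := Set.range eB) hdense
    rintro _ ⟨n, rfl⟩
    by_cases hn : n < 0
    · simp only [ContinuousLinearMap.comp_apply]
      rw [Pminus_eB_neg hn]
      set k : ℕ := (-1 - n).toNat with hk
      have hkn : n = -1 - (k : ℤ) := by omega
      rw [hkn, X_eB X h k]
      apply Lp.ext
      filter_upwards [Mzb_pow_coeFn k (X zbarL2), Mop_coeFn _ hψ (eB (-1 - (k : ℤ))),
        eB_coeFn (-1 - (k : ℤ))] with x h1 h2 h3
      rw [h1, h2, h3]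
      show fourier (-(k : ℤ)) x * ⇑(X zbarL2) x
          = (fourier 1 x * ⇑(X zbarL2) x) * fourier (-1 - (k : ℤ)) x
      rw [show fourier 1 x * ⇑(X zbarL2) x * fourier (-1 - (k : ℤ)) x
          = (fourier 1 x * fourier (-1 - (k : ℤ)) x) * ⇑(X zbarL2) x by ring, ← fourier_add]
      have he : (1 : ℤ) + (-1 - (k : ℤ)) = -(k : ℤ) := by ring
      rw [he]
    · push_neg at hn
      simp only [ContinuousLinearMap.comp_apply]
      rw [Pminus_eB_nonneg hn, map_zero, map_zero]

end PaperTH
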